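/- The following identities hold in Ω²: x ω² = 0 = ω² x and x ω̄² = 0 = ω̄² x. -/

import Mathlib

private theorem qdisc_core {Ω : Type*} [Ring Ω] [Algebra ℂ Ω]
    (T : ℂ) (hT0 : T ≠ 0) (hT1 : (1:ℂ) - T ≠ 0) (hT3 : (1:ℂ) - T^3 ≠ 0)
    (hTi : T^2 + 1 ≠ 0)
    (𝒜 : ℕ → Submodule ℂ Ω)
    (d : Ω →ₗ[ℂ] Ω)
    (hLeib : ∀ {n : ℕ} {ξ : Ω}, ξ ∈ 𝒜 n → ∀ η : Ω,
      d (ξ * η) = d ξ * η + ((-1 : ℂ) ^ n) • (ξ * d η))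
    (Z W ω ωb : Ω)
    (hZ0 : Z ∈ 𝒜 0) (hW0 : W ∈ 𝒜 0) (hZZ0 : Z*Z ∈ 𝒜 0) (hω1 : ω ∈ 𝒜 1)
    (hWZ : W*Z = T•(Z*W) + ((1:ℂ)-T)•(1:Ω))
    (hωZ : ω*Z = T•(Z*ω))
    (hωbZ : ωb*Z = T•(Z*ωb))
    (hωW : ω*W = T⁻¹•(W*ω))
    (hdZ : d Z = W*ω) (hdW : d W = T•(Z*ωb))
    (hddZ : d (d Z) = 0) :
    Z*(W*(ω*ω)) = ω*ω := by
  -- commutation rules with arbitrary right factor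
  have rWZ : ∀ u : Ω, W*(Z*u) = T•(Z*(W*u)) + ((1:ℂ)-T)•u := by
    intro u
    rw [← mul_assoc, hWZ, add_mul, smul_mul_assoc, smul_mul_assoc, one_mul, mul_assoc]
  have rωZ : ∀ u : Ω, ω*(Z*u) = T•(Z*(ω*u)) := by
    intro u; rw [← mul_assoc, hωZ, smul_mul_assoc, mul_assoc]
  have rωbZ : ∀ u : Ω, ωb*(Z*u) = T•(Z*(ωb*u)) := by
    intro u; rw [← mul_assoc, hωbZ, smul_mul_assoc, mul_assoc]
  have rωW : ∀ u : Ω, ω*(W*u) = T⁻¹•(W*(ω*u)) := by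
    intro u; rw [← mul_assoc, hωW, smul_mul_assoc, mul_assoc]
  -- F1 : W * dω = -T • (Z*(ωb*ω))
  have h1 : d (d Z) = T•(Z*(ωb*ω)) + W*(d ω) := by
    rw [hdZ, hLeib hW0, hdW, pow_zero, one_smul, smul_mul_assoc, mul_assoc]
  have F1 : W*(d ω) = (-T)•(Z*(ωb*ω)) := by
    have h0 : T•(Z*(ωb*ω)) + W*(d ω) = 0 := h1.symm.trans hddZ
    calc W*(d ω) = (T•(Z*(ωb*ω)) + W*(d ω)) + (-T)•(Z*(ωb*ω)) := by module
    _ = 0 + (-T)•(Z*(ωb*ω)) := by rw [h0]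
    _ = (-T)•(Z*(ωb*ω)) := by module
  -- F2
  have h2a : d (ω*Z) = d ω*Z + (-1:ℂ)•(ω*(W*ω)) := by
    rw [hLeib hω1, hdZ, pow_one]
  have h2b : d (ω*Z) = T•(W*(ω*ω)) + T•(Z*(d ω)) := by
    rw [hωZ, map_smul, hLeib hZ0, hdZ, pow_zero, one_smul, smul_add, mul_assoc]
  have F2 : T•(d ω*Z) = (T^2+1)•(W*(ω*ω)) + (T^2)•(Z*(d ω)) := by
    have key : d ω*Z + (-1:ℂ)•(ω*(W*ω)) = T•(W*(ω*ω)) + T•(Z*(d ω)) :=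
      h2a.symm.trans h2b
    have hc : ω*(W*ω) = T⁻¹•(W*(ω*ω)) := rωW ω
    calc T•(d ω*Z) = T•(d ω*Z + (-1:ℂ)•(ω*(W*ω))) + T•(ω*(W*ω)) := by module
    _ = T•(T•(W*(ω*ω)) + T•(Z*(d ω))) + T•(T⁻¹•(W*(ω*ω))) := by rw [key, hc]
    _ = T•(T•(W*(ω*ω)) + T•(Z*(d ω))) + (T*T⁻¹)•(W*(ω*ω)) := by rw [smul_smul]
    _ = T•(T•(W*(ω*ω)) + T•(Z*(d ω))) + (1:ℂ)•(W*(ω*ω)) := by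
          rw [mul_inv_cancel₀ hT0]
    _ = (T^2+1)•(W*(ω*ω)) + (T^2)•(Z*(d ω)) := by module
  -- F3 : (T^2(1-T)) • dω = -(T^2+1) • W*(W*(ω*ω))
  have hbz : (Z*(ωb*ω))*Z = (T^2)•(Z*(Z*(ωb*ω))) := by
    simp only [mul_assoc, mul_add, add_mul, smul_add, mul_smul_comm, smul_mul_assoc,
      smul_smul, mul_one, one_mul, hωZ, rωZ, hωbZ, rωbZ, hWZ, rWZ]
    module
  have hL : W*(T•(d ω*Z)) = (-(T^4))•(Z*(Z*(ωb*ω))) := by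
    rw [mul_smul_comm, ← mul_assoc W (d ω) Z, F1, smul_mul_assoc, hbz]
    module
  have hR : W*((T^2+1)•(W*(ω*ω)) + (T^2)•(Z*(d ω)))
      = (T^2+1)•(W*(W*(ω*ω))) + (-(T^4))•(Z*(Z*(ωb*ω))) + (T^2*((1:ℂ)-T))•(d ω) := by
    rw [mul_add, mul_smul_comm, mul_smul_comm, rWZ, F1]
    simp only [smul_add, smul_smul, mul_smul_comm]
    module
  have hWF2 : W*(T•(d ω*Z)) = W*((T^2+1)•(W*(ω*ω)) + (T^2)•(Z*(d ω))) := by rw [F2]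
  have h0 : (-(T^4))•(Z*(Z*(ωb*ω)))
      = (T^2+1)•(W*(W*(ω*ω))) + (-(T^4))•(Z*(Z*(ωb*ω))) + (T^2*((1:ℂ)-T))•(d ω) :=
    hL.symm.trans (hWF2.trans hR)
  have F3 : (T^2*((1:ℂ)-T))•(d ω) = (-(T^2+1))•(W*(W*(ω*ω))) := by
    calc (T^2*((1:ℂ)-T))•(d ω)
        = ((T^2+1)•(W*(W*(ω*ω))) + (-(T^4))•(Z*(Z*(ωb*ω))) + (T^2*((1:ℂ)-T))•(d ω))
            + (T^4)•(Z*(Z*(ωb*ω))) + (-(T^2+1))•(W*(W*(ω*ω))) := by module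
      _ = ((-(T^4))•(Z*(Z*(ωb*ω))))
            + (T^4)•(Z*(Z*(ωb*ω))) + (-(T^2+1))•(W*(W*(ω*ω))) := by rw [← h0]
      _ = (-(T^2+1))•(W*(W*(ω*ω))) := by module
  -- F4 : Z*(W*(W*(ω*ω))) = W*(ω*ω)
  have hWWZ : (W*(W*(ω*ω)))*Z
      = (T^4)•(Z*(W*(W*(ω*ω)))) + ((T^3+T^2)*((1:ℂ)-T))•(W*(ω*ω)) := by
    simp only [mul_assoc, mul_add, add_mul, smul_add, mul_smul_comm, smul_mul_assoc,
      smul_smul, mul_one, one_mul, hωZ, rωZ, hωbZ, rωbZ, hWZ, rWZ]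
    module
  have hL4 : (T^2*((1:ℂ)-T))•(T•(d ω*Z))
      = (-(T^5*(T^2+1)))•(Z*(W*(W*(ω*ω))))
        + (-(T*((T^3+T^2)*((1:ℂ)-T))*(T^2+1)))•(W*(ω*ω)) := by
    calc (T^2*((1:ℂ)-T))•(T•(d ω*Z)) = T•(((T^2*((1:ℂ)-T))•(d ω))*Z) := by
          simp only [smul_mul_assoc, smul_smul]; module
      _ = (-(T^5*(T^2+1)))•(Z*(W*(W*(ω*ω))))
            + (-(T*((T^3+T^2)*((1:ℂ)-T))*(T^2+1)))•(W*(ω*ω)) := by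
          rw [F3, smul_mul_assoc, hWWZ]; module
  have hR4 : (T^2*((1:ℂ)-T))•((T^2+1)•(W*(ω*ω)) + (T^2)•(Z*(d ω)))
      = (T^2*((1:ℂ)-T)*(T^2+1))•(W*(ω*ω)) + (-(T^2*(T^2+1)))•(Z*(W*(W*(ω*ω)))) := by
    calc (T^2*((1:ℂ)-T))•((T^2+1)•(W*(ω*ω)) + (T^2)•(Z*(d ω)))
        = (T^2*((1:ℂ)-T)*(T^2+1))•(W*(ω*ω)) + (T^2)•(Z*((T^2*((1:ℂ)-T))•(d ω))) := by
          simp only [smul_add, smul_smul, mul_smul_comm]; module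
      _ = (T^2*((1:ℂ)-T)*(T^2+1))•(W*(ω*ω)) + (-(T^2*(T^2+1)))•(Z*(W*(W*(ω*ω)))) := by
          rw [F3]; simp only [mul_smul_comm, smul_smul]; module
  have hsF2 : (T^2*((1:ℂ)-T))•(T•(d ω*Z))
      = (T^2*((1:ℂ)-T))•((T^2+1)•(W*(ω*ω)) + (T^2)•(Z*(d ω))) := by rw [F2]
  have E0 := hL4.symm.trans (hsF2.trans hR4)
  have hc0 : (T^2*(T^2+1)*((1:ℂ)-T^3)) ≠ 0 :=
    mul_ne_zero (mul_ne_zero (pow_ne_zero 2 hT0) hTi) hT3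
  have F4 : Z*(W*(W*(ω*ω))) = W*(ω*ω) := by
    have h6 : (T^2*(T^2+1)*((1:ℂ)-T^3))•(Z*(W*(W*(ω*ω))))
        = (T^2*(T^2+1)*((1:ℂ)-T^3))•(W*(ω*ω)) := by
      calc (T^2*(T^2+1)*((1:ℂ)-T^3))•(Z*(W*(W*(ω*ω))))
          = ((-(T^5*(T^2+1)))•(Z*(W*(W*(ω*ω))))
              + (-(T*((T^3+T^2)*((1:ℂ)-T))*(T^2+1)))•(W*(ω*ω)))
            + (T^2*(T^2+1)*((1:ℂ)-T^3) + T^5*(T^2+1))•(Z*(W*(W*(ω*ω))))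
            + (T*((T^3+T^2)*((1:ℂ)-T))*(T^2+1))•(W*(ω*ω)) := by module
        _ = ((T^2*((1:ℂ)-T)*(T^2+1))•(W*(ω*ω)) + (-(T^2*(T^2+1)))•(Z*(W*(W*(ω*ω)))))
            + (T^2*(T^2+1)*((1:ℂ)-T^3) + T^5*(T^2+1))•(Z*(W*(W*(ω*ω))))
            + (T*((T^3+T^2)*((1:ℂ)-T))*(T^2+1))•(W*(ω*ω)) := by rw [E0]
        _ = (T^2*(T^2+1)*((1:ℂ)-T^3))•(W*(ω*ω)) := by module
    have h7 := congrArg (fun u => (T^2*(T^2+1)*((1:ℂ)-T^3))⁻¹ • u) h6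
    simpa only [smul_smul, inv_mul_cancel₀ hc0, one_smul] using h7
  -- F5 : the final identity
  have hdZZ : d (Z*Z) = (T^2+1)•(Z*(W*ω)) + (T*((1:ℂ)-T))•ω := by
    rw [hLeib hZ0, hdZ, pow_zero, one_smul]
    simp only [mul_assoc, mul_add, add_mul, smul_add, mul_smul_comm, smul_mul_assoc,
      smul_smul, mul_one, one_mul, hωZ, rωZ, hωbZ, rωbZ, hWZ, rWZ]
    module
  have hQ : ω*(Z*(W*ω)) = Z*(W*(ω*ω)) := by
    rw [rωZ, rωW, mul_smul_comm, smul_smul, mul_inv_cancel₀ hT0, one_smul]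
  have hA : d (ω*(Z*Z))
      = d ω*(Z*Z) + ((-(T^2+1))•(Z*(W*(ω*ω))) + (-(T*((1:ℂ)-T)))•(ω*ω)) := by
    rw [hLeib hω1, hdZZ, pow_one, mul_add, mul_smul_comm, mul_smul_comm, hQ]
    module
  have hωZZ : ω*(Z*Z) = (T^2)•((Z*Z)*ω) := by
    simp only [mul_assoc, rωZ, hωZ, mul_smul_comm, smul_smul]
    module
  have hB : d (ω*(Z*Z))
      = ((T^2*(T^2+1))•(Z*(W*(ω*ω))) + (T^3*((1:ℂ)-T))•(ω*ω)) + (T^2)•((Z*Z)*(d ω)) := by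
    rw [hωZZ, map_smul, hLeib hZZ0, hdZZ, pow_zero, one_smul]
    simp only [add_mul, smul_mul_assoc, smul_add, smul_smul, mul_assoc]
    module
  have hAB : (T^2*((1:ℂ)-T))•(d ω*(Z*Z)
        + ((-(T^2+1))•(Z*(W*(ω*ω))) + (-(T*((1:ℂ)-T)))•(ω*ω)))
      = (T^2*((1:ℂ)-T))•(((T^2*(T^2+1))•(Z*(W*(ω*ω))) + (T^3*((1:ℂ)-T))•(ω*ω))
        + (T^2)•((Z*Z)*(d ω))) := by
    rw [← hA, ← hB]
  have hsEZZ : (T^2*((1:ℂ)-T))•(d ω*(Z*Z)) = (-(T^2+1))•((W*(W*(ω*ω)))*(Z*Z)) := by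
    rw [← smul_mul_assoc, F3, smul_mul_assoc]
  have hNZZ : (W*(W*(ω*ω)))*(Z*Z)
      = (T^8)•(Z*(Z*(W*(W*(ω*ω)))))
        + ((T^3+T^2)*((1:ℂ)-T)*(T^4+T^3))•(Z*(W*(ω*ω)))
        + ((T^3+T^2)*((1:ℂ)-T)*(T^2*((1:ℂ)-T)))•(ω*ω) := by
    simp only [mul_assoc, mul_add, add_mul, smul_add, mul_smul_comm, smul_mul_assoc,
      smul_smul, mul_one, one_mul, hωZ, rωZ, hωbZ, rωbZ, hWZ, rWZ]
    module
  have hZZE : (T^2*((1:ℂ)-T))•((Z*Z)*(d ω)) = (-(T^2+1))•(Z*(Z*(W*(W*(ω*ω))))) := by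
    calc (T^2*((1:ℂ)-T))•((Z*Z)*(d ω)) = Z*(Z*((T^2*((1:ℂ)-T))•(d ω))) := by
          simp only [mul_smul_comm, mul_assoc]
      _ = (-(T^2+1))•(Z*(Z*(W*(W*(ω*ω))))) := by
          rw [F3]; simp only [mul_smul_comm]
  have hLred : (T^2*((1:ℂ)-T))•(d ω*(Z*Z)
        + ((-(T^2+1))•(Z*(W*(ω*ω))) + (-(T*((1:ℂ)-T)))•(ω*ω)))
      = (-(T^2+1))•((T^8)•(Z*(W*(ω*ω)))
          + ((T^3+T^2)*((1:ℂ)-T)*(T^4+T^3))•(Z*(W*(ω*ω)))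
          + ((T^3+T^2)*((1:ℂ)-T)*(T^2*((1:ℂ)-T)))•(ω*ω))
        + ((-(T^2*((1:ℂ)-T)*(T^2+1)))•(Z*(W*(ω*ω)))
          + (-(T^2*((1:ℂ)-T)*(T*((1:ℂ)-T))))•(ω*ω)) := by
    calc (T^2*((1:ℂ)-T))•(d ω*(Z*Z)
          + ((-(T^2+1))•(Z*(W*(ω*ω))) + (-(T*((1:ℂ)-T)))•(ω*ω)))
        = (T^2*((1:ℂ)-T))•(d ω*(Z*Z))
          + ((-(T^2*((1:ℂ)-T)*(T^2+1)))•(Z*(W*(ω*ω)))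
            + (-(T^2*((1:ℂ)-T)*(T*((1:ℂ)-T))))•(ω*ω)) := by module
      _ = (-(T^2+1))•((W*(W*(ω*ω)))*(Z*Z))
          + ((-(T^2*((1:ℂ)-T)*(T^2+1)))•(Z*(W*(ω*ω)))
            + (-(T^2*((1:ℂ)-T)*(T*((1:ℂ)-T))))•(ω*ω)) := by rw [hsEZZ]
      _ = (-(T^2+1))•((T^8)•(Z*(Z*(W*(W*(ω*ω)))))
            + ((T^3+T^2)*((1:ℂ)-T)*(T^4+T^3))•(Z*(W*(ω*ω)))
            + ((T^3+T^2)*((1:ℂ)-T)*(T^2*((1:ℂ)-T)))•(ω*ω))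
          + ((-(T^2*((1:ℂ)-T)*(T^2+1)))•(Z*(W*(ω*ω)))
            + (-(T^2*((1:ℂ)-T)*(T*((1:ℂ)-T))))•(ω*ω)) := by rw [hNZZ]
      _ = _ := by rw [F4]
  have hRred : (T^2*((1:ℂ)-T))•(((T^2*(T^2+1))•(Z*(W*(ω*ω))) + (T^3*((1:ℂ)-T))•(ω*ω))
        + (T^2)•((Z*Z)*(d ω)))
      = ((T^2*((1:ℂ)-T)*(T^2*(T^2+1)))•(Z*(W*(ω*ω)))
          + (T^2*((1:ℂ)-T)*(T^3*((1:ℂ)-T)))•(ω*ω))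
        + (T^2)•((-(T^2+1))•(Z*(W*(ω*ω)))) := by
    calc (T^2*((1:ℂ)-T))•(((T^2*(T^2+1))•(Z*(W*(ω*ω))) + (T^3*((1:ℂ)-T))•(ω*ω))
          + (T^2)•((Z*Z)*(d ω)))
        = ((T^2*((1:ℂ)-T)*(T^2*(T^2+1)))•(Z*(W*(ω*ω)))
            + (T^2*((1:ℂ)-T)*(T^3*((1:ℂ)-T)))•(ω*ω))
          + (T^2)•((T^2*((1:ℂ)-T))•((Z*Z)*(d ω))) := by module
      _ = ((T^2*((1:ℂ)-T)*(T^2*(T^2+1)))•(Z*(W*(ω*ω)))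
            + (T^2*((1:ℂ)-T)*(T^3*((1:ℂ)-T)))•(ω*ω))
          + (T^2)•((-(T^2+1))•(Z*(Z*(W*(W*(ω*ω)))))) := by rw [hZZE]
      _ = _ := by rw [F4]
  have Efin := hLred.symm.trans (hAB.trans hRred)
  have Esub : ((-(T^2+1))•((T^8)•(Z*(W*(ω*ω)))
          + ((T^3+T^2)*((1:ℂ)-T)*(T^4+T^3))•(Z*(W*(ω*ω)))
          + ((T^3+T^2)*((1:ℂ)-T)*(T^2*((1:ℂ)-T)))•(ω*ω))
        + ((-(T^2*((1:ℂ)-T)*(T^2+1)))•(Z*(W*(ω*ω)))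
          + (-(T^2*((1:ℂ)-T)*(T*((1:ℂ)-T))))•(ω*ω)))
      - (((T^2*((1:ℂ)-T)*(T^2*(T^2+1)))•(Z*(W*(ω*ω)))
          + (T^2*((1:ℂ)-T)*(T^3*((1:ℂ)-T)))•(ω*ω))
        + (T^2)•((-(T^2+1))•(Z*(W*(ω*ω))))) = 0 := sub_eq_zero_of_eq Efin
  have hc1 : (T^3*(T^2+1)*(((1:ℂ)-T)*((1:ℂ)-T^3))) ≠ 0 :=
    mul_ne_zero (mul_ne_zero (pow_ne_zero 3 hT0) hTi) (mul_ne_zero hT1 hT3)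
  have h8 : (T^3*(T^2+1)*(((1:ℂ)-T)*((1:ℂ)-T^3)))•(Z*(W*(ω*ω)))
      = (T^3*(T^2+1)*(((1:ℂ)-T)*((1:ℂ)-T^3)))•(ω*ω) := by
    calc (T^3*(T^2+1)*(((1:ℂ)-T)*((1:ℂ)-T^3)))•(Z*(W*(ω*ω)))
        = (((-(T^2+1))•((T^8)•(Z*(W*(ω*ω)))
            + ((T^3+T^2)*((1:ℂ)-T)*(T^4+T^3))•(Z*(W*(ω*ω)))
            + ((T^3+T^2)*((1:ℂ)-T)*(T^2*((1:ℂ)-T)))•(ω*ω))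
          + ((-(T^2*((1:ℂ)-T)*(T^2+1)))•(Z*(W*(ω*ω)))
            + (-(T^2*((1:ℂ)-T)*(T*((1:ℂ)-T))))•(ω*ω)))
          - (((T^2*((1:ℂ)-T)*(T^2*(T^2+1)))•(Z*(W*(ω*ω)))
            + (T^2*((1:ℂ)-T)*(T^3*((1:ℂ)-T)))•(ω*ω))
          + (T^2)•((-(T^2+1))•(Z*(W*(ω*ω))))))
          + (T^3*(T^2+1)*(((1:ℂ)-T)*((1:ℂ)-T^3)))•(ω*ω) := by module
      _ = 0 + (T^3*(T^2+1)*(((1:ℂ)-T)*((1:ℂ)-T^3)))•(ω*ω) := by rw [Esub]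
      _ = (T^3*(T^2+1)*(((1:ℂ)-T)*((1:ℂ)-T^3)))•(ω*ω) := by module
  have h9 := congrArg (fun u => (T^3*(T^2+1)*(((1:ℂ)-T)*((1:ℂ)-T^3)))⁻¹ • u) h8
  simpa only [smul_smul, inv_mul_cancel₀ hc1, one_smul] using h9

theorem x_annihilates_omega_sq
    (q : ℝ) (hq0 : 0 < q) (hq1 : q < 1)
    {A : Type*} [Ring A] [Algebra ℂ A]
    (z w : A)
    (hzw : w * z - ((q : ℂ) ^ 2) • (z * w) = ((1 : ℂ) - (q : ℂ) ^ 2) • (1 : A))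
    (x : A) (hx : x = 1 - z * w)
    (σ : A ≃ₐ[ℂ] A) (hσz : σ z = ((q : ℂ) ^ 2) • z)
    (hσw : σ w = (((q : ℂ) ^ 2)⁻¹) • w)
    (D : A →ₗ[ℂ] A)
    (hD : ∀ a b : A, D (a * b) = D a * σ b + a * D b)
    (hDz : D z = w) (hDw : D w = 0)
    (Db : A →ₗ[ℂ] A)
    (hDb : ∀ a b : A, Db (a * b) = Db a * σ b + a * Db b)
    (hDbz : Db z = 0) (hDbw : Db w = ((q : ℂ) ^ 2) • z)
    {Ω : Type*} [Ring Ω] [Algebra ℂ Ω]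
    (𝒜 : ℕ → Submodule ℂ Ω)
    (hmul : ∀ {m n : ℕ} {ξ η : Ω}, ξ ∈ 𝒜 m → η ∈ 𝒜 n → ξ * η ∈ 𝒜 (m + n))
    (ι : A →ₐ[ℂ] Ω) (hι : Function.Injective ι)
    (hι0 : ∀ a : A, ι a ∈ 𝒜 0) (hι0' : ∀ u ∈ 𝒜 0, ∃ a : A, ι a = u)
    (d : Ω →ₗ[ℂ] Ω)
    (hdeg : ∀ {n : ℕ} {ξ : Ω}, ξ ∈ 𝒜 n → d ξ ∈ 𝒜 (n + 1))
    (hdd : ∀ ξ : Ω, d (d ξ) = 0)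
    (hLeib : ∀ {n : ℕ} {ξ : Ω}, ξ ∈ 𝒜 n → ∀ η : Ω,
      d (ξ * η) = d ξ * η + ((-1 : ℂ) ^ n) • (ξ * d η))
    (ω ωb : Ω) (hω : ω ∈ 𝒜 1) (hωb : ωb ∈ 𝒜 1)
    (hωcomm : ∀ a : A, ω * ι a = ι (σ a) * ω)
    (hωbcomm : ∀ a : A, ωb * ι a = ι (σ a) * ωb)
    (hda : ∀ a : A, d (ι a) = ι (D a) * ω + ι (Db a) * ωb)
    :
    ι x * ω ^ 2 = 0 ∧ ω ^ 2 * ι x = 0 ∧ ι x * ωb ^ 2 = 0 ∧ ωb ^ 2 * ι x = 0 := by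
  set T : ℂ := (q : ℂ)^2 with hTdef
  -- scalar facts
  have hqC : (q : ℂ) ≠ 0 := by
    exact_mod_cast hq0.ne'
  have hT0 : T ≠ 0 := pow_ne_zero 2 hqC
  have hq2 : q^2 < 1 := by nlinarith
  have hq6 : q^6 < 1 := by nlinarith [sq_nonneg q, sq_nonneg (q^2), sq_nonneg (q^3)]
  have hTq : T = ((q^2 : ℝ) : ℂ) := by rw [hTdef]; push_cast; ring
  have hT1C : T ≠ 1 := by
    rw [hTq]; exact_mod_cast ne_of_lt hq2
  have hT3q : T^3 = ((q^6 : ℝ) : ℂ) := by rw [hTdef]; push_cast; ring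
  have hT3C : T^3 ≠ 1 := by
    rw [hT3q]; exact_mod_cast ne_of_lt hq6
  have hTiC : T^2 + 1 ≠ 0 := by
    have h4 : T^2 + 1 = ((q^4 + 1 : ℝ) : ℂ) := by rw [hTdef]; push_cast; ring
    rw [h4]
    exact_mod_cast (by positivity : (0:ℝ) < q^4 + 1).ne'
  have h1T : (1:ℂ) - T ≠ 0 := sub_ne_zero.mpr (Ne.symm hT1C)
  have h1T3 : (1:ℂ) - T^3 ≠ 0 := sub_ne_zero.mpr (Ne.symm hT3C)
  have hT0' : T⁻¹ ≠ 0 := inv_ne_zero hT0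
  have hTinv1 : T⁻¹ ≠ 1 := by rw [Ne, inv_eq_one]; exact hT1C
  have h1T' : (1:ℂ) - T⁻¹ ≠ 0 := sub_ne_zero.mpr (Ne.symm hTinv1)
  have h1T3' : (1:ℂ) - (T⁻¹)^3 ≠ 0 := by
    rw [inv_pow]
    exact sub_ne_zero.mpr (Ne.symm (by rw [Ne, inv_eq_one]; exact hT3C))
  have hTi' : (T⁻¹)^2 + 1 ≠ 0 := by
    rw [inv_pow]
    intro h
    have h2 : T^2 * ((T^2)⁻¹ + 1) = 0 := by rw [h, mul_zero]
    rw [mul_add, mul_inv_cancel₀ (pow_ne_zero 2 hT0), mul_one] at h2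
    exact hTiC (by linear_combination h2)
  -- basic Ω-level facts
  have hWZ : (ι w)*(ι z) = T•((ι z)*(ι w)) + ((1:ℂ)-T)•(1:Ω) := by
    have h := congrArg ι hzw
    simp only [map_sub, map_smul, map_mul, map_one] at h
    calc (ι w)*(ι z) = ((ι w)*(ι z) - T•((ι z)*(ι w))) + T•((ι z)*(ι w)) := by module
    _ = ((1:ℂ)-T)•(1:Ω) + T•((ι z)*(ι w)) := by rw [h]
    _ = T•((ι z)*(ι w)) + ((1:ℂ)-T)•(1:Ω) := by module
  have hωZ : ω*(ι z) = T•((ι z)*ω) := by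
    rw [hωcomm z, hσz, map_smul, smul_mul_assoc]
  have hωW : ω*(ι w) = T⁻¹•((ι w)*ω) := by
    rw [hωcomm w, hσw, map_smul, smul_mul_assoc]
  have hωbZ : ωb*(ι z) = T•((ι z)*ωb) := by
    rw [hωbcomm z, hσz, map_smul, smul_mul_assoc]
  have hωbW : ωb*(ι w) = T⁻¹•((ι w)*ωb) := by
    rw [hωbcomm w, hσw, map_smul, smul_mul_assoc]
  have hdZ : d (ι z) = (ι w)*ω := by
    rw [hda z, hDz, hDbz, map_zero, zero_mul, add_zero]
  have hdW : d (ι w) = T•((ι z)*ωb) := by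
    rw [hda w, hDw, hDbw, map_zero, zero_mul, zero_add, map_smul, smul_mul_assoc]
  -- first application of the core lemma (for ω)
  have hcore1 : (ι z)*((ι w)*(ω*ω)) = ω*ω :=
    qdisc_core T hT0 h1T h1T3 hTiC 𝒜 d hLeib (ι z) (ι w) ω ωb
      (hι0 z) (hι0 w) (hmul (hι0 z) (hι0 z)) hω
      hWZ hωZ hωbZ hωW hdZ hdW (hdd (ι z))
  -- second application (for ωb), with roles of z,w swapped and T ↦ T⁻¹
  have hWZ' : (ι z)*(ι w) = T⁻¹•((ι w)*(ι z)) + ((1:ℂ)-T⁻¹)•(1:Ω) := by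
    have h1 : T•((ι z)*(ι w)) = (ι w)*(ι z) - ((1:ℂ)-T)•(1:Ω) := by
      rw [hWZ]; module
    have h2 := congrArg (fun u => T⁻¹ • u) h1
    simp only [smul_smul, inv_mul_cancel₀ hT0, one_smul, smul_sub] at h2
    rw [h2]
    match_scalars <;> field_simp <;> ring
  have hd' : ∀ {n : ℕ} {ξ : Ω}, ξ ∈ 𝒜 n → ∀ η : Ω,
      (T⁻¹ • d) (ξ * η) = (T⁻¹ • d) ξ * η + ((-1 : ℂ) ^ n) • (ξ * (T⁻¹ • d) η) := by
    intro n ξ hξ η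
    simp only [LinearMap.smul_apply]
    rw [hLeib hξ η]
    generalize ((-1:ℂ))^n = s
    simp only [smul_add, smul_smul, smul_mul_assoc, mul_smul_comm]
    module
  have hωbZinv : ωb*(ι z) = (T⁻¹)⁻¹•((ι z)*ωb) := by rw [inv_inv]; exact hωbZ
  have hdZ' : (T⁻¹ • d) (ι w) = (ι z)*ωb := by
    simp only [LinearMap.smul_apply, hdW, smul_smul, inv_mul_cancel₀ hT0, one_smul]
  have hdW' : (T⁻¹ • d) (ι z) = T⁻¹•((ι w)*ω) := by
    simp only [LinearMap.smul_apply, hdZ]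
  have hddW' : (T⁻¹ • d) ((T⁻¹ • d) (ι w)) = 0 := by
    simp only [LinearMap.smul_apply, map_smul, hdd (ι w), smul_zero]
  have hcore2 : (ι w)*((ι z)*(ωb*ωb)) = ωb*ωb :=
    qdisc_core T⁻¹ hT0' h1T' h1T3' hTi' 𝒜 (T⁻¹ • d) hd' (ι w) (ι z) ωb ω
      (hι0 w) (hι0 z) (hmul (hι0 w) (hι0 w)) hωb
      hWZ' hωbW hωW hωbZinv hdZ' hdW' hddW'
  have hres2 : (ι z)*((ι w)*(ωb*ωb)) = ωb*ωb := by
    calc (ι z)*((ι w)*(ωb*ωb)) = ((ι z)*(ι w))*(ωb*ωb) := by rw [mul_assoc]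
    _ = (T⁻¹•((ι w)*(ι z)) + ((1:ℂ)-T⁻¹)•(1:Ω))*(ωb*ωb) := by rw [hWZ']
    _ = T⁻¹•((ι w)*((ι z)*(ωb*ωb))) + ((1:ℂ)-T⁻¹)•(ωb*ωb) := by
        simp only [add_mul, smul_mul_assoc, one_mul, mul_assoc]
    _ = T⁻¹•(ωb*ωb) + ((1:ℂ)-T⁻¹)•(ωb*ωb) := by rw [hcore2]
    _ = ωb*ωb := by module
  -- wrap up
  have hιx : ι x = 1 - (ι z)*(ι w) := by rw [hx, map_sub, map_one, map_mul]
  have hσx : σ x = x := by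
    rw [hx, map_sub, map_one, map_mul, hσz, hσw, smul_mul_assoc, mul_smul_comm,
      smul_smul, mul_inv_cancel₀ hT0, one_smul]
  have g1 : ι x * ω ^ 2 = 0 := by
    rw [pow_two, hιx, sub_mul, one_mul, mul_assoc, hcore1, sub_self]
  have g3 : ι x * ωb ^ 2 = 0 := by
    rw [pow_two, hιx, sub_mul, one_mul, mul_assoc, hres2, sub_self]
  have hcx : ω * ι x = ι x * ω := by rw [hωcomm x, hσx]
  have hcxb : ωb * ι x = ι x * ωb := by rw [hωbcomm x, hσx]
  have g2 : ω ^ 2 * ι x = 0 := by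
    calc ω ^ 2 * ι x = ι x * ω ^ 2 := by
          rw [pow_two, mul_assoc, hcx, ← mul_assoc, hcx, mul_assoc]
    _ = 0 := g1
  have g4 : ωb ^ 2 * ι x = 0 := by
    calc ωb ^ 2 * ι x = ι x * ωb ^ 2 := by
          rw [pow_two, mul_assoc, hcxb, ← mul_assoc, hcxb, mul_assoc]
    _ = 0 := g3
  exact ⟨g1, g2, g3, g4⟩
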